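/- Let C be a class label random variable and B a discrete random variable (hash code). The Bayes error of predicting C from B is at most (H(C) − I(B; C))/2, where H is Shannon entropy (in bits) and I mutual information. -/

import Mathlib

open Finset

/-- Probability that the random variable `X` takes the value `a`, under the
probability mass function `μ` on the finite sample space `Ω`. -/
noncomputable def pr {Ω : Type*} [Fintype Ω] {α : Type*} [DecidableEq α]
    (μ : Ω → ℝ) (X : Ω → α) (a : α) : ℝ :=
  ∑ ω, if X ω = a then μ ω else 0

/-- Shannon entropy (base 2) of a finitely-valued random variable. -/
noncomputable def entropy {Ω : Type*} [Fintype Ω] {α : Type*} [Fintype α] [DecidableEq α]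
    (μ : Ω → ℝ) (X : Ω → α) : ℝ :=
  ∑ a, -(pr μ X a * Real.logb 2 (pr μ X a))

/-- Shannon mutual information I(X;Y) = H(X) + H(Y) − H(X,Y). -/
noncomputable def mutualInfo {Ω : Type*} [Fintype Ω]
    {α β : Type*} [Fintype α] [DecidableEq α] [Fintype β] [DecidableEq β]
    (μ : Ω → ℝ) (X : Ω → α) (Y : Ω → β) : ℝ :=
  entropy μ X + entropy μ Y - entropy μ (fun ω => (X ω, Y ω))

/-- Conditional Shannon entropy H(X | Y) = H(X,Y) − H(Y). -/
noncomputable def condEntropy {Ω : Type*} [Fintype Ω]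
    {α β : Type*} [Fintype α] [DecidableEq α] [Fintype β] [DecidableEq β]
    (μ : Ω → ℝ) (X : Ω → α) (Y : Ω → β) : ℝ :=
  entropy μ (fun ω => (X ω, Y ω)) - entropy μ Y

/-- The joint random variable formed by tupling the variables `B i` for `i ∈ S`. -/
def joint {Ω α : Type*} {M : ℕ} (B : Fin M → Ω → α) (S : Finset (Fin M)) :
    Ω → (S → α) :=
  fun ω i => B i ω


lemma L1_log {p : ℝ} (hp : 0 < p) (hp2 : p ≤ 1/2) :
    2 * (1 - p) * Real.log 2 ≤ -Real.log p := by
  have h2p : (0:ℝ) < 2 * p := by linarith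
  have h1 : Real.log (2 * p) ≤ 2 * p - 1 := Real.log_le_sub_one_of_pos h2p
  have h2 : Real.log (2 * p) = Real.log 2 + Real.log p := Real.log_mul (by norm_num) (ne_of_gt hp)
  have hl2 : Real.log 2 < 0.6931471808 := Real.log_two_lt_d9
  nlinarith [Real.log_two_gt_d9]

lemma L2_log {u : ℝ} (hu : 0 < u) (hu2 : u ≤ 1/2) :
    2 * u * Real.log 2 ≤ -((1 - u) * Real.log (1 - u)) - u * Real.log u := by
  have h1u : (0:ℝ) < 1 - u := by linarith
  have hA : Real.log (1 - u) ≤ -u := by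
    have := Real.log_le_sub_one_of_pos h1u; linarith
  have hB : Real.log u = Real.log (2 * u) - Real.log 2 := by
    rw [Real.log_mul (by norm_num) (ne_of_gt hu)]; ring
  have hB' : Real.log (2 * u) ≤ 2 * u - 1 := Real.log_le_sub_one_of_pos (by linarith)
  have hC : Real.log (1 - u) = Real.log (2 * (1 - u)) - Real.log 2 := by
    rw [Real.log_mul (by norm_num) (ne_of_gt h1u)]; ring
  have hC' : Real.log (2 * (1 - u)) ≤ 2 * (1 - u) - 1 := Real.log_le_sub_one_of_pos (by linarith)
  have hl2 : Real.log 2 < 0.6931471808 := Real.log_two_lt_d9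
  have hg2 : (0.6931471803:ℝ) < Real.log 2 := Real.log_two_gt_d9
  rcases le_or_gt u (2/5) with h | h
  · nlinarith
  · nlinarith

/-- Normalized key lemma, natural log version:
`(1 - max) * log 2 ≤ (1/2) * entropy` (nats). -/
lemma norm_key_log {γ : Type*} [Fintype γ] [DecidableEq γ] (w : γ → ℝ) (hw : ∀ c, 0 ≤ w c)
    (hs : ∑ c, w c = 1) (c0 : γ) (hm : ∀ c, w c ≤ w c0) :
    (1 - w c0) * Real.log 2 ≤ (1/2) * ∑ c, -(w c * Real.log (w c)) := by
  set p := w c0 with hp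
  have hp1 : p ≤ 1 := by
    rw [← hs]
    exact Finset.single_le_sum (fun c _ => hw c) (Finset.mem_univ c0)
  have hppos : 0 < p := by
    by_contra h
    push_neg at h
    have : (∑ c, w c) ≤ 0 := by
      apply Finset.sum_nonpos
      intro c _
      exact le_trans (hm c) h
    linarith [hs ▸ this]
  have hwle1 : ∀ c, w c ≤ 1 := fun c => le_trans (hm c) hp1
  have hterm_nonneg : ∀ c, 0 ≤ -(w c * Real.log (w c)) := by
    intro c
    rcases eq_or_lt_of_le (hw c) with h | h
    · simp [← h]
    · have : Real.log (w c) ≤ 0 := Real.log_nonpos (le_of_lt h) (hwle1 c)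
      nlinarith
  rcases le_or_gt p (1/2) with hcase | hcase
  · -- small max: use H ≥ -log p
    have hbound : ∀ c, w c * (-Real.log p) ≤ -(w c * Real.log (w c)) := by
      intro c
      rcases eq_or_lt_of_le (hw c) with h | h
      · simp [← h]
      · have : Real.log (w c) ≤ Real.log p := Real.log_le_log h (hm c)
        nlinarith
    have hsum : (-Real.log p) ≤ ∑ c, -(w c * Real.log (w c)) := by
      calc (-Real.log p) = ∑ c, w c * (-Real.log p) := by
            rw [← Finset.sum_mul, hs, one_mul]
        _ ≤ _ := Finset.sum_le_sum (fun c _ => hbound c)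
    have := L1_log hppos hcase
    linarith
  · -- large max
    rcases eq_or_lt_of_le hp1 with hpe | hplt
    · -- p = 1 : LHS = 0
      have : (1 - p) * Real.log 2 = 0 := by rw [hpe]; ring
      rw [this]
      have : (0:ℝ) ≤ ∑ c, -(w c * Real.log (w c)) :=
        Finset.sum_nonneg (fun c _ => hterm_nonneg c)
      linarith
    · have hu : 0 < 1 - p := by linarith
      have hu2 : 1 - p ≤ 1/2 := by linarith
      have hrest : ∑ c ∈ Finset.univ.erase c0, w c = 1 - p := by
        have := Finset.add_sum_erase Finset.univ w (Finset.mem_univ c0)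
        rw [hs] at this
        linarith
      have hwle : ∀ c ∈ Finset.univ.erase c0, w c ≤ 1 - p := by
        intro c hc
        rw [← hrest]
        exact Finset.single_le_sum (fun d _ => hw d) hc
      have hbound : ∀ c ∈ Finset.univ.erase c0,
          w c * (-Real.log (1 - p)) ≤ -(w c * Real.log (w c)) := by
        intro c hc
        rcases eq_or_lt_of_le (hw c) with h | h
        · simp [← h]
        · have : Real.log (w c) ≤ Real.log (1 - p) := Real.log_le_log h (hwle c hc)
          nlinarith
      have hsum : -(p * Real.log p) + (1 - p) * (-Real.log (1 - p))
          ≤ ∑ c, -(w c * Real.log (w c)) := by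
        rw [← Finset.add_sum_erase Finset.univ (fun c => -(w c * Real.log (w c)))
          (Finset.mem_univ c0)]
        have : (1 - p) * (-Real.log (1 - p))
            = ∑ c ∈ Finset.univ.erase c0, w c * (-Real.log (1 - p)) := by
          rw [← Finset.sum_mul, hrest]
        rw [this]
        exact add_le_add le_rfl (Finset.sum_le_sum hbound)
      have := L2_log hu hu2
      have h1p : (1:ℝ) - (1 - p) = p := by ring
      rw [h1p] at this
      linarith

/-- Unnormalized key lemma in base-2 logs. -/
lemma key_logb {γ : Type*} [Fintype γ] [DecidableEq γ] (v : γ → ℝ) (hv : ∀ c, 0 ≤ v c)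
    (c0 : γ) (hm : ∀ c, v c ≤ v c0) :
    (∑ c, v c) - v c0 ≤
      (1/2) * ((∑ c, v c) * Real.logb 2 (∑ c, v c) - ∑ c, v c * Real.logb 2 (v c)) := by
  set s := ∑ c, v c with hsdef
  have hs0 : 0 ≤ s := Finset.sum_nonneg (fun c _ => hv c)
  rcases eq_or_lt_of_le hs0 with hz | hspos
  · have hall : ∀ c ∈ Finset.univ, v c = 0 :=
      (Finset.sum_eq_zero_iff_of_nonneg (fun c _ => hv c)).1 hz.symm
    have h0 : ∑ c, v c * Real.logb 2 (v c) = 0 :=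
      Finset.sum_eq_zero (fun c hc => by rw [hall c hc]; ring)
    rw [← hz, h0, hall c0 (Finset.mem_univ c0)]
    norm_num
  · have hl2 : (0:ℝ) < Real.log 2 := Real.log_pos (by norm_num)
    set w : γ → ℝ := fun c => v c / s with hwdef
    have hw : ∀ c, 0 ≤ w c := fun c => div_nonneg (hv c) hs0
    have hws : ∑ c, w c = 1 := by
      rw [hwdef, ← Finset.sum_div, ← hsdef, div_self (ne_of_gt hspos)]
    have hwm : ∀ c, w c ≤ w c0 := fun c =>
      div_le_div_of_nonneg_right (hm c) hs0
    have hkey := norm_key_log w hw hws c0 hwm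
    have hterm : ∀ c, -(w c * Real.log (w c))
        = (v c * Real.log s - v c * Real.log (v c)) / s := by
      intro c
      rcases eq_or_lt_of_le (hv c) with h | h
      · simp [hwdef, ← h]
      · rw [hwdef]
        simp only
        rw [Real.log_div (ne_of_gt h) (ne_of_gt hspos)]
        field_simp
        ring
    have hsumlog : ∑ c, -(w c * Real.log (w c))
        = (s * Real.log s - ∑ c, v c * Real.log (v c)) / s := by
      rw [Finset.sum_congr rfl (fun c _ => hterm c), ← Finset.sum_div]
      congr 1
      rw [Finset.sum_sub_distrib, ← Finset.sum_mul, ← hsdef]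
    rw [hsumlog] at hkey
    have hwc0 : w c0 = v c0 / s := rfl
    rw [hwc0] at hkey
    -- clear denominators in hkey : (1 - v c0 / s) * log 2 ≤ 1/2 * ((s log s - T)/s)
    set T := ∑ c, v c * Real.log (v c) with hT
    have hkey2 : (s - v c0) * Real.log 2 ≤ (1/2) * (s * Real.log s - T) := by
      have h2 := mul_le_mul_of_nonneg_right hkey hs0
      have e1 : (1 - v c0 / s) * Real.log 2 * s = (s - v c0) * Real.log 2 := by
        field_simp
      have e2 : 1/2 * ((s * Real.log s - T) / s) * s = 1/2 * (s * Real.log s - T) := by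
        field_simp
      rw [e1, e2] at h2
      exact h2
    -- convert goal to natural log
    have hsum2 : ∑ c, v c * Real.logb 2 (v c) = T / Real.log 2 := by
      rw [hT, Finset.sum_div]
      exact Finset.sum_congr rfl (fun c _ => by rw [Real.logb, mul_div_assoc])
    have hgoal : (1/2) * (s * Real.logb 2 s - ∑ c, v c * Real.logb 2 (v c))
        = ((1/2) * (s * Real.log s - T)) / Real.log 2 := by
      rw [hsum2, Real.logb]
      field_simp
      try ring
    rw [hgoal, le_div_iff₀ hl2]
    linarith

/-- Hellman–Raviv bound: the Bayes error of predicting the class C from the code B is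
at most (H(C) − I(B;C))/2, i.e. some classifier g achieves error ≤ H(C|B)/2. -/
theorem bayes_error_le_hellman_raviv {Ω : Type*} [Fintype Ω]
    {β γ : Type*} [Fintype β] [DecidableEq β] [Fintype γ] [DecidableEq γ]
    (μ : Ω → ℝ) (hμ : ∀ ω, 0 ≤ μ ω) (hμ1 : ∑ ω, μ ω = 1)
    (B : Ω → β) (C : Ω → γ) :
    ∃ g : β → γ,
      (∑ ω, if g (B ω) ≠ C ω then μ ω else 0)
        ≤ (entropy μ C - mutualInfo μ B C) / 2 := by
  have hΩ : Nonempty Ω := by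
    by_contra h
    rw [not_nonempty_iff] at h
    simp at hμ1
  have hγ : Nonempty γ := ⟨C (Classical.arbitrary Ω)⟩
  set q : β → γ → ℝ := fun b c => pr μ (fun ω => (B ω, C ω)) (b, c) with hqdef
  have hq0 : ∀ b c, 0 ≤ q b c := by
    intro b c
    apply Finset.sum_nonneg
    intro ω _
    split <;> [exact hμ ω; exact le_rfl]
  have hex : ∀ b, ∃ c0 : γ, ∀ c, q b c ≤ q b c0 := by
    intro b
    obtain ⟨c0, -, h⟩ := Finset.exists_max_image Finset.univ (q b) Finset.univ_nonempty
    exact ⟨c0, fun c => h c (Finset.mem_univ c)⟩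
  set g : β → γ := fun b => Classical.choose (hex b) with hgdef
  have hg : ∀ b c, q b c ≤ q b (g b) := fun b => Classical.choose_spec (hex b)
  refine ⟨g, ?_⟩
  -- marginal
  have hmarg : ∀ b, ∑ c, q b c = pr μ B b := by
    intro b
    rw [hqdef]
    simp only [pr]
    rw [Finset.sum_comm]
    apply Finset.sum_congr rfl
    intro ω _
    by_cases h : B ω = b
    · simp [Prod.ext_iff, h]
    · simp [Prod.ext_iff, h]
  -- error identity
  have herr : (∑ ω, if g (B ω) ≠ C ω then μ ω else 0)
      = ∑ b, (pr μ B b - q b (g b)) := by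
    have step : ∀ ω, ∑ b, (if (B ω, C ω) = (b, g b) then μ ω else 0)
        = if g (B ω) = C ω then μ ω else 0 := by
      intro ω
      rw [Finset.sum_eq_single (B ω)]
      · by_cases h : g (B ω) = C ω
        · simp [Prod.ext_iff, h.symm]
        · rw [if_neg, if_neg h]
          intro h'
          rw [Prod.mk.injEq] at h'
          exact h h'.2.symm
      · intro b _ hb
        rw [if_neg]
        intro hcontra
        rw [Prod.mk.injEq] at hcontra
        exact hb hcontra.1.symm
      · intro h
        exact absurd (Finset.mem_univ _) h
    have expand : ∀ b, pr μ B b - q b (g b)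
        = ∑ ω, ((if B ω = b then μ ω else 0) - (if (B ω, C ω) = (b, g b) then μ ω else 0)) := by
      intro b
      rw [Finset.sum_sub_distrib]
      rfl
    rw [Finset.sum_congr rfl (fun b _ => expand b), Finset.sum_comm]
    apply Finset.sum_congr rfl
    intro ω _
    rw [Finset.sum_sub_distrib, Finset.sum_ite_eq, step ω]
    by_cases h : g (B ω) = C ω <;> simp [h]
  -- RHS identity
  have hrhs : entropy μ C - mutualInfo μ B C
      = ∑ b, (pr μ B b * Real.logb 2 (pr μ B b) - ∑ c, q b c * Real.logb 2 (q b c)) := by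
    have h1 : entropy μ C - mutualInfo μ B C
        = entropy μ (fun ω => (B ω, C ω)) - entropy μ B := by
      rw [mutualInfo]; ring
    rw [h1, entropy, entropy, Fintype.sum_prod_type]
    rw [← Finset.sum_sub_distrib]
    apply Finset.sum_congr rfl
    intro b _
    rw [Finset.sum_neg_distrib]
    ring_nf
    simp only [hqdef]; ring
  rw [herr, hrhs, Finset.sum_div]
  apply Finset.sum_le_sum
  intro b _
  have := key_logb (q b) (hq0 b) (g b) (hg b)
  rw [hmarg b] at this
  linarith
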